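/- Let g : [0,1] → [0,1] be defined by g(x) = x·sin²(1/x) for x ∈ (0,1] and g(0) = 0. Then the upper-scaled oscillation L_g(x) is finite for every x ∈ [0,1], and the graph {(x, g(x)) : x ∈ [0,1]} ⊂ ℝ² has infinite 1-dimensional Hausdorff measure. -/

import Mathlib

open Set MeasureTheory Metric Filter
open scoped ENNReal NNReal Topology

private lemma sinsq_lip (a b : ℝ) : |Real.sin a ^ 2 - Real.sin b ^ 2| ≤ 2 * |a - b| := by
  have h1 : Real.sin a ^ 2 - Real.sin b ^ 2
      = (Real.sin a - Real.sin b) * (Real.sin a + Real.sin b) := by ring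
  have h2 : |Real.sin a - Real.sin b| ≤ |a - b| := by
    rw [Real.sin_sub_sin]
    calc |2 * Real.sin ((a - b) / 2) * Real.cos ((a + b) / 2)|
        = 2 * |Real.sin ((a - b) / 2)| * |Real.cos ((a + b) / 2)| := by
          rw [abs_mul, abs_mul]; simp [abs_of_nonneg]
      _ ≤ 2 * |(a - b) / 2| * 1 := by
          apply mul_le_mul _ (Real.abs_cos_le_one _) (abs_nonneg _) (by positivity)
          exact mul_le_mul_of_nonneg_left Real.abs_sin_le_abs (by norm_num)
      _ = |a - b| := by
          rw [abs_div, abs_two]; ring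
  have h3 : |Real.sin a + Real.sin b| ≤ 2 := by
    calc |Real.sin a + Real.sin b| ≤ |Real.sin a| + |Real.sin b| := abs_add_le _ _
      _ ≤ 1 + 1 := add_le_add (Real.abs_sin_le_one a) (Real.abs_sin_le_one b)
      _ = 2 := by norm_num
  calc |Real.sin a ^ 2 - Real.sin b ^ 2|
      = |Real.sin a - Real.sin b| * |Real.sin a + Real.sin b| := by rw [h1, abs_mul]
    _ ≤ |a - b| * 2 := mul_le_mul h2 h3 (abs_nonneg _) (abs_nonneg _)
    _ = 2 * |a - b| := by ring

private lemma osc_key {x y : ℝ} (hx : x ∈ Set.Ioc (0:ℝ) 1) (hy : y ∈ Set.Ioc (0:ℝ) 1)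
    (hyx : x / 2 ≤ y) :
    |y * Real.sin y⁻¹ ^ 2 - x * Real.sin x⁻¹ ^ 2| ≤ (1 + 4 / x) * |y - x| := by
  obtain ⟨hx0, hx1⟩ := hx
  obtain ⟨hy0, hy1⟩ := hy
  have heq : y * Real.sin y⁻¹ ^ 2 - x * Real.sin x⁻¹ ^ 2
      = (y - x) * Real.sin y⁻¹ ^ 2 + x * (Real.sin y⁻¹ ^ 2 - Real.sin x⁻¹ ^ 2) := by ring
  have hinv : |y⁻¹ - x⁻¹| ≤ 2 / x ^ 2 * |y - x| := by
    have h : y⁻¹ - x⁻¹ = (x - y) / (x * y) := by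
      rw [inv_sub_inv hy0.ne' hx0.ne', mul_comm]
    rw [h, abs_div, abs_of_pos (mul_pos hx0 hy0)]
    rw [div_le_iff₀ (mul_pos hx0 hy0)]
    have hxy : x ^ 2 / 2 ≤ x * y := by
      have := mul_le_mul_of_nonneg_left hyx hx0.le
      nlinarith
    have h2 : |x - y| = |y - x| := abs_sub_comm _ _
    rw [h2]
    have hx2 : (0:ℝ) < x ^ 2 := by positivity
    calc |y - x| = 2 / x ^ 2 * |y - x| * (x ^ 2 / 2) := by field_simp
      _ ≤ 2 / x ^ 2 * |y - x| * (x * y) := by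
          have hc : 0 ≤ 2 / x ^ 2 * |y - x| := by positivity
          exact mul_le_mul_of_nonneg_left hxy hc
  calc |y * Real.sin y⁻¹ ^ 2 - x * Real.sin x⁻¹ ^ 2|
      ≤ |(y - x) * Real.sin y⁻¹ ^ 2| + |x * (Real.sin y⁻¹ ^ 2 - Real.sin x⁻¹ ^ 2)| := by
        rw [heq]; exact abs_add_le _ _
    _ ≤ |y - x| * 1 + x * (2 * |y⁻¹ - x⁻¹|) := by
        apply add_le_add
        · rw [abs_mul]
          apply mul_le_mul_of_nonneg_left _ (abs_nonneg _)
          rw [abs_of_nonneg (sq_nonneg _)]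
          exact Real.sin_sq_le_one _
        · rw [abs_mul, abs_of_pos hx0]
          exact mul_le_mul_of_nonneg_left (sinsq_lip _ _) hx0.le
    _ ≤ |y - x| * 1 + x * (2 * (2 / x ^ 2 * |y - x|)) := by gcongr
    _ = (1 + 4 / x) * |y - x| := by field_simp; ring

/-- Lower-scaled oscillation of `f` with domain `A`:
`l_f(x) = liminf_{r→0⁺} (sup_{y ∈ A, dist y x ≤ r} dist (f y) (f x)) / r`. -/
noncomputable def lowerScaledOsc {E F : Type*} [PseudoMetricSpace E] [PseudoMetricSpace F]
    (A : Set E) (f : E → F) (x : E) : ℝ≥0∞ :=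
  Filter.liminf
    (fun r : ℝ =>
      (⨆ (y : E) (_ : y ∈ A) (_ : dist y x ≤ r), ENNReal.ofReal (dist (f y) (f x))) /
        ENNReal.ofReal r)
    (nhdsWithin 0 (Set.Ioi 0))

/-- Upper-scaled oscillation of `f` with domain `A`:
`L_f(x) = limsup_{r→0⁺} (sup_{y ∈ A, dist y x ≤ r} dist (f y) (f x)) / r`. -/
noncomputable def upperScaledOsc {E F : Type*} [PseudoMetricSpace E] [PseudoMetricSpace F]
    (A : Set E) (f : E → F) (x : E) : ℝ≥0∞ :=
  Filter.limsup
    (fun r : ℝ =>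
      (⨆ (y : E) (_ : y ∈ A) (_ : dist y x ≤ r), ENNReal.ofReal (dist (f y) (f x))) /
        ENNReal.ofReal r)
    (nhdsWithin 0 (Set.Ioi 0))


theorem stmt12 (g : ℝ → ℝ) (hg0 : g 0 = 0)
    (hg : ∀ x ∈ Set.Ioc (0:ℝ) 1, g x = x * Real.sin x⁻¹ ^ 2) :
    (∀ x ∈ Set.Icc (0:ℝ) 1, upperScaledOsc (Set.Icc 0 1) g x < ⊤) ∧
    μH[1] ((fun x => (x, g x)) '' Set.Icc (0:ℝ) 1 : Set (ℝ × ℝ)) = ⊤ := by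
  constructor
  · -- Part 1: finiteness of the upper scaled oscillation
    intro x hx
    rcases eq_or_lt_of_le hx.1 with hx0 | hx0
    · -- x = 0
      have hx0' : x = 0 := hx0.symm
      subst hx0'
      have hle : upperScaledOsc (Set.Icc 0 1) g 0 ≤ 1 := by
        apply Filter.limsup_le_of_le
        · isBoundedDefault
        filter_upwards [self_mem_nhdsWithin] with r (hr : 0 < r)
        apply ENNReal.div_le_of_le_mul
        rw [one_mul]
        refine iSup_le fun y => iSup_le fun hy => iSup_le fun hd => ?_
        apply ENNReal.ofReal_le_ofReal
        rw [Real.dist_eq, hg0, sub_zero]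
        rcases eq_or_lt_of_le hy.1 with h0 | h0
        · rw [← h0, hg0]; simpa using hr.le
        · have hgy : g y = y * Real.sin y⁻¹ ^ 2 := hg y ⟨h0, hy.2⟩
          have h1 : |g y| ≤ y := by
            rw [hgy, abs_mul, abs_of_pos h0]
            calc y * |Real.sin y⁻¹ ^ 2| ≤ y * 1 := by
                  gcongr
                  rw [abs_of_nonneg (sq_nonneg _)]
                  exact Real.sin_sq_le_one _
              _ = y := mul_one y
          have h2 : y ≤ r := by
            have := hd
            rw [Real.dist_eq, sub_zero, abs_of_pos h0] at this
            exact this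
          exact h1.trans h2
      exact lt_of_le_of_lt hle (by simp)
    · -- x > 0
      have hx1 : x ≤ 1 := hx.2
      set L : ℝ := 1 + 4 / x with hL
      have hL0 : 0 ≤ L := by
        have h4 : 0 ≤ 4 / x := by positivity
        rw [hL]; linarith
      have hle : upperScaledOsc (Set.Icc 0 1) g x ≤ ENNReal.ofReal L := by
        apply Filter.limsup_le_of_le
        · isBoundedDefault
        filter_upwards [Ioo_mem_nhdsGT_of_mem ⟨le_refl (0:ℝ), half_pos hx0⟩] with r hr
        obtain ⟨hr0, hrx⟩ := hr
        apply ENNReal.div_le_of_le_mul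
        refine iSup_le fun y => iSup_le fun hy => iSup_le fun hd => ?_
        rw [← ENNReal.ofReal_mul hL0]
        apply ENNReal.ofReal_le_ofReal
        rw [Real.dist_eq] at hd ⊢
        have hyx : x / 2 ≤ y := by
          have : x - y ≤ |y - x| := by rw [abs_sub_comm]; exact le_abs_self _
          linarith
        have hy0 : 0 < y := lt_of_lt_of_le (half_pos hx0) hyx
        have hgy : g y = y * Real.sin y⁻¹ ^ 2 := hg y ⟨hy0, hy.2⟩
        have hgx : g x = x * Real.sin x⁻¹ ^ 2 := hg x ⟨hx0, hx1⟩
        rw [hgy, hgx]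
        calc |y * Real.sin y⁻¹ ^ 2 - x * Real.sin x⁻¹ ^ 2| ≤ L * |y - x| :=
              osc_key ⟨hx0, hx1⟩ ⟨hy0, hy.2⟩ hyx
          _ ≤ L * r := by gcongr
      exact lt_of_le_of_lt hle ENNReal.ofReal_lt_top
  · -- Part 2: infinite H^1 measure of the graph
    have pi_pos := Real.pi_pos
    have pi_le_four := Real.pi_le_four
    have pi_gt_three := Real.pi_gt_three
    set u : ℕ → ℝ := fun k => (((k:ℝ) + 1 + 1/2) * Real.pi)⁻¹ with hu
    set v : ℕ → ℝ := fun k => (((k:ℝ) + 1) * Real.pi)⁻¹ with hv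
    have hk0 : ∀ k : ℕ, (0:ℝ) ≤ (k:ℝ) := fun k => Nat.cast_nonneg k
    have hu_pos : ∀ k, 0 < u k := by
      intro k
      have := hk0 k
      rw [hu]
      positivity
    have hv_pos : ∀ k, 0 < v k := by
      intro k
      have := hk0 k
      rw [hv]
      positivity
    have huv : ∀ k, u k < v k := by
      intro k
      have := hk0 k
      rw [hu, hv]
      apply inv_strictAnti₀
      · positivity
      · nlinarith
    have hv1 : ∀ k, v k ≤ 1 := by
      intro k
      have := hk0 k
      rw [hv]
      rw [inv_le_one_iff₀]
      right
      nlinarith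
    have hIsub : ∀ k, Set.Icc (u k) (v k) ⊆ Set.Ioc (0:ℝ) 1 := by
      intro k x hx
      exact ⟨lt_of_lt_of_le (hu_pos k) hx.1, hx.2.trans (hv1 k)⟩
    have hIsub' : ∀ k, Set.Icc (u k) (v k) ⊆ Set.Icc (0:ℝ) 1 := by
      intro k x hx
      exact ⟨(lt_of_lt_of_le (hu_pos k) hx.1).le, hx.2.trans (hv1 k)⟩
    have hgv : ∀ k, g (v k) = 0 := by
      intro k
      rw [hg (v k) (hIsub k ⟨(huv k).le, le_refl _⟩)]
      have h1 : (v k)⁻¹ = ((k:ℝ) + 1) * Real.pi := by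
        rw [hv, inv_inv]
      rw [h1]
      have h2 : Real.sin (((k:ℝ) + 1) * Real.pi) = 0 := by
        have := Real.sin_nat_mul_pi (k + 1)
        push_cast at this
        exact this
      rw [h2]
      ring
    have hgu : ∀ k, g (u k) = u k := by
      intro k
      rw [hg (u k) (hIsub k ⟨le_refl _, (huv k).le⟩)]
      have h1 : (u k)⁻¹ = ((k:ℝ) + 1) * Real.pi + Real.pi / 2 := by
        rw [hu, inv_inv]
        ring
      rw [h1]
      have h2 : Real.cos (((k:ℝ) + 1) * Real.pi + Real.pi / 2) = 0 := by
        rw [Real.cos_add_pi_div_two]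
        have := Real.sin_nat_mul_pi (k + 1)
        push_cast at this
        rw [this]
        ring
      rw [Real.sin_sq, h2]
      ring
    have hcont : ∀ k, ContinuousOn g (Set.Icc (u k) (v k)) := by
      intro k
      have hc : ContinuousOn (fun x : ℝ => x * Real.sin x⁻¹ ^ 2) (Set.Icc (u k) (v k)) := by
        apply ContinuousOn.mul continuousOn_id
        apply ContinuousOn.pow
        apply Real.continuous_sin.comp_continuousOn
        apply ContinuousOn.inv₀ continuousOn_id
        intro x hx
        exact ne_of_gt (lt_of_lt_of_le (hu_pos k) hx.1)
      exact hc.congr fun x hx => hg x (hIsub k hx)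
    set P : ℕ → Set (ℝ × ℝ) := fun k => (fun x => (x, g x)) '' Set.Icc (u k) (v k) with hP
    have hPcomp : ∀ k, IsCompact (P k) := by
      intro k
      apply isCompact_Icc.image_of_continuousOn
      exact continuousOn_id.prodMk (hcont k)
    have hPmeas : ∀ k, MeasurableSet (P k) := fun k => (hPcomp k).measurableSet
    have hvu : ∀ k l, k < l → v l < u k := by
      intro k l hkl
      rw [hu, hv]
      apply inv_strictAnti₀
      · have := hk0 k; positivity
      · have hkl' : (k:ℝ) + 1 ≤ (l:ℝ) := by exact_mod_cast hkl
        nlinarith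
    have hdisj : ∀ k l, k < l → Disjoint (P k) (P l) := by
      intro k l hkl
      rw [Set.disjoint_left]
      rintro z ⟨x, hx, rfl⟩ ⟨x', hx', hxx'⟩
      have hfst : x' = x := congrArg Prod.fst hxx'
      subst hfst
      have := hvu k l hkl
      have h1 : u k ≤ x' := hx.1
      have h2 : x' ≤ v l := hx'.2
      linarith
    have hPdisj : Pairwise (Function.onFun Disjoint P) := by
      intro k l hkl
      rcases hkl.lt_or_gt with h | h
      · exact hdisj k l h
      · exact (hdisj l k h).symm
    have hlow : ∀ k, ENNReal.ofReal (u k) ≤ μH[1] (P k) := by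
      intro k
      have hivt : Set.Icc (0:ℝ) (u k) ⊆ g '' Set.Icc (u k) (v k) := by
        have h := intermediate_value_Icc' (huv k).le (hcont k)
        rwa [hgv k, hgu k] at h
      have himg : g '' Set.Icc (u k) (v k) = Prod.snd '' P k := by
        rw [hP, Set.image_image]
      calc ENNReal.ofReal (u k) = μH[1] (Set.Icc (0:ℝ) (u k)) := by
            rw [MeasureTheory.hausdorffMeasure_real, Real.volume_Icc, sub_zero]
        _ ≤ μH[1] (g '' Set.Icc (u k) (v k)) := measure_mono hivt
        _ = μH[1] (Prod.snd '' P k) := by rw [himg]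
        _ ≤ μH[1] (P k) := by
            have h := LipschitzWith.prod_snd.hausdorffMeasure_image_le
              (by norm_num : (0:ℝ) ≤ 1) (P k)
            simpa using h
    have hsum : ∑' k, ENNReal.ofReal (u k) = ⊤ := by
      by_contra h
      have hs := ENNReal.summable_toReal h
      have htr : (fun k => (ENNReal.ofReal (u k)).toReal) = u := by
        funext k
        exact ENNReal.toReal_ofReal (hu_pos k).le
      rw [htr] at hs
      have hcomp : Summable (fun k : ℕ => (8 * ((k:ℝ) + 1))⁻¹) := by
        apply Summable.of_nonneg_of_le (fun k => by have := hk0 k; positivity)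
          (fun k => ?_) hs
        rw [hu]
        apply inv_anti₀
        · have := hk0 k; positivity
        · have := hk0 k; nlinarith
      have h8 : Summable (fun k : ℕ => ((k:ℝ) + 1)⁻¹) := by
        have h := hcomp.mul_left 8
        have he : (fun k : ℕ => 8 * (8 * ((k:ℝ) + 1))⁻¹) = fun k : ℕ => ((k:ℝ) + 1)⁻¹ := by
          funext k
          have := hk0 k
          field_simp
        rwa [he] at h
      have hnat : Summable (fun n : ℕ => ((n:ℝ))⁻¹) := by
        rw [← summable_nat_add_iff 1]
        simpa using h8
      exact Real.not_summable_natCast_inv hnat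
    have hsub : (⋃ k, P k) ⊆ (fun x => (x, g x)) '' Set.Icc (0:ℝ) 1 :=
      Set.iUnion_subset fun k => Set.image_mono (hIsub' k)
    have hmono := measure_mono (μ := μH[1]) hsub
    rw [measure_iUnion hPdisj hPmeas] at hmono
    refine top_unique ?_
    calc (⊤ : ℝ≥0∞) = ∑' k, ENNReal.ofReal (u k) := hsum.symm
      _ ≤ ∑' k, μH[1] (P k) := ENNReal.tsum_le_tsum hlow
      _ ≤ μH[1] ((fun x => (x, g x)) '' Set.Icc (0:ℝ) 1) := hmono
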